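/- In a connected graph G on n vertices, the sum over all edges (a,b) of the effective resistance r_{ab} equals n - 1. -/

import Mathlib

open Matrix

/-- Effective resistance between two vertices, given a pseudoinverse `Lp` of the Laplacian. -/
def effR {V : Type*} [Fintype V] [DecidableEq V] (Lp : Matrix V V ℝ) (a b : V) : ℝ :=
  (Pi.single a 1 - Pi.single b 1) ⬝ᵥ Lp.mulVec (Pi.single a 1 - Pi.single b 1)

lemma effR_symm {V : Type*} [Fintype V] [DecidableEq V] (Lp : Matrix V V ℝ) (a b : V) :
    effR Lp a b = effR Lp b a := by
  unfold effR
  rw [show (Pi.single a 1 - Pi.single b 1 : V → ℝ) = -(Pi.single b 1 - Pi.single a 1) by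
    rw [neg_sub]]
  rw [Matrix.mulVec_neg, dotProduct_neg, neg_dotProduct, neg_neg]

section Aux

variable {V : Type*} [Fintype V] [DecidableEq V] (G : SimpleGraph V) [DecidableRel G.Adj]
  (Lp : Matrix V V ℝ)

lemma effR_eq_entries (a b : V) :
    effR Lp a b = Lp a a + Lp b b - Lp a b - Lp b a := by
  unfold effR
  simp [Matrix.mulVec_sub, dotProduct_sub, sub_dotProduct,
    Matrix.mulVec_single, single_dotProduct, dotProduct_single]
  ring

lemma two_sum_edges (f : V → V → ℝ) (hf : ∀ a b, f a b = f b a) :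
    2 * ∑ e ∈ G.edgeFinset, Sym2.lift ⟨f, hf⟩ e = ∑ a, ∑ b, if G.Adj a b then f a b else 0 := by
  classical
  have key : ∑ d : G.Dart, Sym2.lift ⟨f, hf⟩ d.edge
      = ∑ e ∈ G.edgeFinset, 2 * Sym2.lift ⟨f, hf⟩ e := by
    rw [← Finset.sum_fiberwise_of_maps_to (g := fun d : G.Dart => d.edge)
      (fun d _ => SimpleGraph.mem_edgeFinset.2 d.edge_mem)
      (fun d => Sym2.lift ⟨f, hf⟩ d.edge)]
    refine Finset.sum_congr rfl fun e he => ?_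
    rw [Finset.sum_congr rfl (fun d hd => by rw [(Finset.mem_filter.1 hd).2]),
      Finset.sum_const, nsmul_eq_mul,
      SimpleGraph.dart_edge_fiber_card G e (SimpleGraph.mem_edgeFinset.1 he)]
    norm_num
  have lhs : ∑ d : G.Dart, Sym2.lift ⟨f, hf⟩ d.edge
      = ∑ a, ∑ b, if G.Adj a b then f a b else 0 := by
    have h1 : ∀ d : G.Dart, Sym2.lift ⟨f, hf⟩ d.edge = f d.fst d.snd := fun d => rfl
    simp_rw [h1]
    rw [show (∑ a, ∑ b, if G.Adj a b then f a b else 0)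
        = ∑ p ∈ Finset.univ.filter (fun p : V × V => G.Adj p.1 p.2), f p.1 p.2 by
      rw [Finset.sum_filter, ← Fintype.sum_prod_type']]
    refine Finset.sum_bij (fun d _ => (d.fst, d.snd)) ?_ ?_ ?_ ?_
    · intro d _; simp [d.adj]
    · intro d1 _ d2 _ h
      exact SimpleGraph.Dart.ext _ _ (Prod.ext (congrArg Prod.fst h) (congrArg Prod.snd h))
    · intro p hp
      exact ⟨⟨p, (Finset.mem_filter.1 hp).2⟩, Finset.mem_univ _, rfl⟩
    · intro d _; rfl
  rw [← lhs, key, Finset.mul_sum]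

lemma trace_lap_mul : Matrix.trace (G.lapMatrix ℝ * Lp)
    = ∑ a, (G.degree a : ℝ) * Lp a a - ∑ a, ∑ b, (if G.Adj a b then Lp b a else 0) := by
  rw [Matrix.trace, ← Finset.sum_sub_distrib]
  refine Finset.sum_congr rfl fun a _ => ?_
  rw [Matrix.diag_apply, Matrix.mul_apply]
  simp_rw [SimpleGraph.lapMatrix, Matrix.sub_apply, sub_mul, Finset.sum_sub_distrib,
    SimpleGraph.degMatrix, SimpleGraph.adjMatrix_apply, Matrix.diagonal_apply, ite_mul,
    one_mul, zero_mul]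
  rw [Finset.sum_ite_eq _ a (fun b => (G.degree a : ℝ) * Lp b a)]
  simp

lemma swap_sum : ∑ a, ∑ b, (if G.Adj a b then Lp a b else 0)
    = ∑ a, ∑ b, (if G.Adj a b then Lp b a else 0) := by
  rw [Finset.sum_comm]
  exact Finset.sum_congr rfl fun a _ => Finset.sum_congr rfl fun b _ =>
    if_congr (G.adj_comm b a) rfl rfl

lemma deg_sum (a : V) : ∑ b, (if G.Adj a b then Lp a a else 0) = (G.degree a : ℝ) * Lp a a := by
  rw [Finset.sum_ite, Finset.sum_const, Finset.sum_const_zero, add_zero, nsmul_eq_mul]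
  congr 2
  rw [SimpleGraph.degree, SimpleGraph.neighborFinset_eq_filter]

lemma big_sum_eq_two_trace :
    ∑ a, ∑ b, (if G.Adj a b then Lp a a + Lp b b - Lp a b - Lp b a else 0)
    = 2 * Matrix.trace (G.lapMatrix ℝ * Lp) := by
  have expand : ∀ a b : V, (if G.Adj a b then Lp a a + Lp b b - Lp a b - Lp b a else 0)
      = ((if G.Adj a b then Lp a a else 0) + (if G.Adj a b then Lp b b else 0))
        - ((if G.Adj a b then Lp a b else 0) + (if G.Adj a b then Lp b a else 0)) := by
    intro a b; by_cases h : G.Adj a b <;> simp [h] <;> ring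
  simp_rw [expand, Finset.sum_sub_distrib, Finset.sum_add_distrib]
  have e1 : ∑ a, ∑ b, (if G.Adj a b then Lp a a else 0) = ∑ a, (G.degree a : ℝ) * Lp a a :=
    Finset.sum_congr rfl fun a _ => deg_sum G Lp a
  have e2 : ∑ a : V, ∑ b, (if G.Adj a b then Lp b b else 0) = ∑ a, (G.degree a : ℝ) * Lp a a := by
    rw [Finset.sum_comm]
    exact Finset.sum_congr rfl fun b _ => by
      rw [Finset.sum_congr rfl fun a _ => if_congr (G.adj_comm a b) rfl rfl]
      exact deg_sum G Lp b
  rw [e1, e2, swap_sum, trace_lap_mul]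
  ring

lemma trace_lap_pinv_eq (hconn : G.Connected)
    (h1 : G.lapMatrix ℝ * Lp * G.lapMatrix ℝ = G.lapMatrix ℝ)
    (h2 : Lp * G.lapMatrix ℝ * Lp = Lp) :
    Matrix.trace (G.lapMatrix ℝ * Lp) = (Fintype.card V : ℝ) - 1 := by
  classical
  have hne : Nonempty V := hconn.nonempty
  set L := G.lapMatrix ℝ with hL
  set P := L * Lp with hP
  set f := Matrix.toLin' P with hf
  have hPP : P * P = P := by
    rw [hP, mul_assoc, ← mul_assoc Lp L Lp, h2]
  have hff : f ∘ₗ f = f := by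
    rw [hf, ← Matrix.toLin'_mul, hPP]
  have hproj : LinearMap.IsProj (LinearMap.range f) f := by
    refine ⟨fun x => LinearMap.mem_range_self f x, ?_⟩
    rintro x ⟨y, rfl⟩
    exact congrFun (congrArg DFunLike.coe hff) y
  have hrange : LinearMap.range f = LinearMap.range (Matrix.toLin' L) := by
    apply le_antisymm
    · rw [hf, hP, Matrix.toLin'_mul]
      exact LinearMap.range_comp_le_range _ _
    · have : Matrix.toLin' L = f ∘ₗ Matrix.toLin' L := by
        rw [hf, ← Matrix.toLin'_mul, hP, h1]
      rw [this]
      exact LinearMap.range_comp_le_range _ _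
  have hker : Module.finrank ℝ (LinearMap.ker (Matrix.toLin' L)) = 1 := by
    rw [hL, ← SimpleGraph.card_connectedComponent_eq_finrank_ker_toLin'_lapMatrix]
    have : Subsingleton G.ConnectedComponent := hconn.preconnected.subsingleton_connectedComponent
    exact Fintype.card_eq_one_iff.2 ⟨G.connectedComponentMk (Classical.arbitrary V),
      fun x => Subsingleton.elim _ _⟩
  have hrk : Module.finrank ℝ (LinearMap.range (Matrix.toLin' L)) = Fintype.card V - 1 := by
    have := LinearMap.finrank_range_add_finrank_ker (Matrix.toLin' L)
    rw [hker] at this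
    have hcard : Module.finrank ℝ (V → ℝ) = Fintype.card V := by
      simp [Module.finrank_pi]
    omega
  have htr : Matrix.trace P = LinearMap.trace ℝ (V → ℝ) f := by
    rw [hf, LinearMap.trace_eq_matrix_trace ℝ (Pi.basisFun ℝ V),
      LinearMap.toMatrix_eq_toMatrix', LinearMap.toMatrix'_toLin']
  rw [htr, hproj.trace, hrange, hrk]
  have hn : 1 ≤ Fintype.card V := Fintype.card_pos_iff.2 ⟨Classical.arbitrary V⟩
  push_cast [Nat.cast_sub hn]
  ring

end Aux

theorem stmt_13 {V : Type*} [Fintype V] [DecidableEq V]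
    (G : SimpleGraph V) [DecidableRel G.Adj] (hconn : G.Connected)
    (Lp : Matrix V V ℝ)
    (h1 : G.lapMatrix ℝ * Lp * G.lapMatrix ℝ = G.lapMatrix ℝ)
    (h2 : Lp * G.lapMatrix ℝ * Lp = Lp)
    (h3 : (G.lapMatrix ℝ * Lp).IsSymm) (h4 : (Lp * G.lapMatrix ℝ).IsSymm) :
    ∑ e ∈ G.edgeFinset, Sym2.lift ⟨effR Lp, effR_symm Lp⟩ e =
      (Fintype.card V : ℝ) - 1 := by
  have key := two_sum_edges G (effR Lp) (effR_symm Lp)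
  simp_rw [effR_eq_entries] at key
  rw [big_sum_eq_two_trace G Lp, trace_lap_pinv_eq G Lp hconn h1 h2] at key
  linarith
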